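/- Suppose X_1,...,X_n are independent with a change-point at k: indices ≤ k from continuous law F, indices > k from continuous law G, with p = P(X_1 ≤ X_n). Let R_i be combined-sample ranks and for k < m ≤ n define T_m = Σ_{j=k+1}^{m} R_j. Then T_m admits the decomposition T_m = (m−k)(m−k+1)/2 + (m−k)(n−m) V_1 + (m−k)k V_2, where V_1 and V_2 are two-sample U-statistics with kernels that are indicators, E[V_1] = 1/2 and E[V_2] = p. -/

import Mathlib

open MeasureTheory ProbabilityTheory Finset

lemma my_sum_ite_le {ι : Type*} [DecidableEq ι] (S : Finset ι) (f : ι → ℝ)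
    (hf : Set.InjOn f S) :
    ∑ j ∈ S, ∑ i ∈ S, (if f i ≤ f j then (1:ℝ) else 0)
      = (S.card : ℝ) * ((S.card : ℝ) + 1) / 2 := by
  classical
  set T := ∑ j ∈ S, ∑ i ∈ S, (if f i ≤ f j then (1:ℝ) else 0) with hT
  have h1 : T = ∑ j ∈ S, ∑ i ∈ S, (if f j ≤ f i then (1:ℝ) else 0) := by
    rw [hT, Finset.sum_comm]
  have key : T + T = (S.card : ℝ) * (S.card : ℝ) + (S.card : ℝ) := by
    nth_rewrite 2 [h1]
    rw [hT, ← Finset.sum_add_distrib]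
    simp_rw [← Finset.sum_add_distrib]
    have step : ∀ j ∈ S, ∀ i ∈ S,
        ((if f i ≤ f j then (1:ℝ) else 0) + (if f j ≤ f i then (1:ℝ) else 0))
          = (1:ℝ) + (if i = j then 1 else 0) := by
      intro j hj i hi
      by_cases hij : i = j
      · subst hij; simp
      · have hne : f i ≠ f j := fun h => hij (hf (Finset.mem_coe.mpr hi) (Finset.mem_coe.mpr hj) h)
        rcases le_total (f i) (f j) with h | h
        · simp [h, hij, (lt_of_le_of_ne h hne).not_ge]
        · simp [h, hij, (lt_of_le_of_ne h hne.symm).not_ge]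
    rw [Finset.sum_congr rfl fun j hj => Finset.sum_congr rfl fun i hi => step j hj i hi]
    simp_rw [Finset.sum_add_distrib, Finset.sum_const, nsmul_eq_mul, mul_one]
    have : ∀ j ∈ S, (∑ i ∈ S, (if i = j then (1:ℝ) else 0)) = 1 := by
      intro j hj
      rw [Finset.sum_ite_eq' S j (fun _ => (1:ℝ))]
      simp [hj]
    rw [Finset.sum_congr rfl fun j hj => by rw [this j hj]]
    simp [Finset.sum_add_distrib]
  linarith [key]

lemma my_prob_le_eq {Ω : Type*} [MeasureSpace Ω] [IsProbabilityMeasure (ℙ : Measure Ω)]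
    (X Y : Ω → ℝ) (hX : Measurable X) (hY : Measurable Y) (h : IndepFun X Y ℙ) :
    ℙ {ω | X ω ≤ Y ω} = ((Measure.map X ℙ).prod (Measure.map Y ℙ)) {p : ℝ × ℝ | p.1 ≤ p.2} := by
  have hmap : Measure.map (fun ω => (X ω, Y ω)) ℙ = (Measure.map X ℙ).prod (Measure.map Y ℙ) :=
    (indepFun_iff_map_prod_eq_prod_map_map hX.aemeasurable hY.aemeasurable).mp h
  have hs : MeasurableSet {p : ℝ × ℝ | p.1 ≤ p.2} :=
    measurableSet_le measurable_fst measurable_snd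
  rw [← hmap, Measure.map_apply (hX.prodMk hY) hs]
  rfl

lemma my_prod_le_half (G : Measure ℝ) [IsProbabilityMeasure G] (hGc : ∀ x : ℝ, G {x} = 0) :
    (G.prod G) {p : ℝ × ℝ | p.1 ≤ p.2} = 1/2 := by
  have hs : MeasurableSet {p : ℝ × ℝ | p.1 ≤ p.2} :=
    measurableSet_le measurable_fst measurable_snd
  have hs' : MeasurableSet {p : ℝ × ℝ | p.2 ≤ p.1} :=
    measurableSet_le measurable_snd measurable_fst
  have hdiag : (G.prod G) {p : ℝ × ℝ | p.1 = p.2} = 0 := by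
    have hd : MeasurableSet {p : ℝ × ℝ | p.1 = p.2} :=
      measurableSet_eq_fun measurable_fst measurable_snd
    rw [Measure.prod_apply hd]
    have : ∀ x : ℝ, (Prod.mk x ⁻¹' {p : ℝ × ℝ | p.1 = p.2}) = {x} := by
      intro x; ext y; simp [eq_comm]
    simp [this, hGc]
  have hswap : (G.prod G) {p : ℝ × ℝ | p.2 ≤ p.1} = (G.prod G) {p : ℝ × ℝ | p.1 ≤ p.2} := by
    have h0 : (G.prod G).map Prod.swap = G.prod G := Measure.prod_swap
    calc (G.prod G) {p : ℝ × ℝ | p.2 ≤ p.1}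
        = ((G.prod G).map Prod.swap) {p : ℝ × ℝ | p.2 ≤ p.1} := by rw [h0]
      _ = (G.prod G) (Prod.swap ⁻¹' {p : ℝ × ℝ | p.2 ≤ p.1}) :=
          Measure.map_apply measurable_swap hs'
      _ = (G.prod G) {p : ℝ × ℝ | p.1 ≤ p.2} := rfl
  have hunion : {p : ℝ × ℝ | p.1 ≤ p.2} ∪ {p : ℝ × ℝ | p.2 ≤ p.1} = Set.univ := by
    ext p; simpa using le_total p.1 p.2
  have hinter : {p : ℝ × ℝ | p.1 ≤ p.2} ∩ {p : ℝ × ℝ | p.2 ≤ p.1} = {p : ℝ × ℝ | p.1 = p.2} := by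
    ext p; simp [le_antisymm_iff]
  have hadd := measure_union_add_inter (μ := G.prod G) {p : ℝ × ℝ | p.1 ≤ p.2} hs'
  rw [hunion, hinter, hdiag, add_zero, hswap, measure_univ] at hadd
  have h2 : 2 * (G.prod G) {p : ℝ × ℝ | p.1 ≤ p.2} = 1 := by
    rw [two_mul]; exact hadd.symm
  rw [ENNReal.eq_div_iff (by norm_num) (by norm_num)]
  exact h2

lemma my_integral_ite {Ω : Type*} [MeasureSpace Ω] [IsProbabilityMeasure (ℙ : Measure Ω)]
    (X Y : Ω → ℝ) (hX : Measurable X) (hY : Measurable Y) :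
    ∫ ω, (if X ω ≤ Y ω then (1:ℝ) else 0) ∂ℙ = (ℙ {ω | X ω ≤ Y ω}).toReal := by
  have hs : MeasurableSet {ω | X ω ≤ Y ω} := measurableSet_le hX hY
  rw [← measureReal_def, ← MeasureTheory.integral_indicator_one hs]
  congr 1

lemma my_integrable_ite {Ω : Type*} [MeasureSpace Ω] [IsProbabilityMeasure (ℙ : Measure Ω)]
    (X Y : Ω → ℝ) (hX : Measurable X) (hY : Measurable Y) :
    Integrable (fun ω => if X ω ≤ Y ω then (1:ℝ) else 0) ℙ := by
  have hs : MeasurableSet {ω | X ω ≤ Y ω} := measurableSet_le hX hY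
  have := (integrable_const (1:ℝ) (μ := (ℙ : Measure Ω))).indicator hs
  refine this.congr (Filter.Eventually.of_forall fun ω => ?_)
  simp [Set.indicator_apply, Set.mem_setOf_eq]

open scoped Classical in
/-- The rank of observation `j` in the combined sample `X 1, …, X n`. -/
noncomputable def combinedRank {Ω : Type*} (n : ℕ) (X : ℕ → Ω → ℝ) (j : ℕ) (ω : Ω) : ℕ :=
  ((Finset.Icc 1 n).filter (fun i => X i ω ≤ X j ω)).card

/-- U-statistic decomposition of the post-change rank sum `T_m = ∑_{j=k+1}^m R_j`:
`T_m = (m−k)(m−k+1)/2 + (m−k)(n−m) V₁ + (m−k)k V₂`, where `V₁, V₂` are the two-sample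
U-statistics with indicator kernels, `E[V₁] = 1/2` and `E[V₂] = p = P(X₁ ≤ Xₙ)`. -/
theorem post_change_rank_sum_decomposition {Ω : Type*} [MeasureSpace Ω]
    [IsProbabilityMeasure (ℙ : Measure Ω)]
    (n k m : ℕ) (X : ℕ → Ω → ℝ) (F G : Measure ℝ)
    (hmeas : ∀ i, Measurable (X i))
    (hk1 : 1 ≤ k) (hkm : k < m) (hmn : m < n)
    (hindep : iIndepFun (fun i : Fin n => X (i + 1)) ℙ)
    (hF : ∀ i ∈ Set.Icc 1 k, Measure.map (X i) ℙ = F)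
    (hG : ∀ i ∈ Set.Icc (k + 1) n, Measure.map (X i) ℙ = G)
    (hFcont : ∀ x : ℝ, F {x} = 0) (hGcont : ∀ x : ℝ, G {x} = 0)
    (hties : ∀ᵐ ω ∂ℙ, Set.InjOn (fun i => X i ω) (Set.Icc 1 n)) :
    -- the two-sample U-statistics with indicator kernels
    (∀ᵐ ω ∂ℙ,
      (∑ j ∈ Finset.Icc (k + 1) m, (combinedRank n X j ω : ℝ)) =
        ((m : ℝ) - k) * (((m : ℝ) - k) + 1) / 2
          + ((m : ℝ) - k) * ((n : ℝ) - m) *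
              ((1 / (((m : ℝ) - k) * ((n : ℝ) - m))) *
                ∑ j ∈ Finset.Icc (k + 1) m, ∑ i ∈ Finset.Icc (m + 1) n,
                  (if X i ω ≤ X j ω then (1 : ℝ) else 0))
          + ((m : ℝ) - k) * (k : ℝ) *
              ((1 / (((m : ℝ) - k) * (k : ℝ))) *
                ∑ j ∈ Finset.Icc (k + 1) m, ∑ i ∈ Finset.Icc 1 k,
                  (if X i ω ≤ X j ω then (1 : ℝ) else 0))) ∧
    (∫ ω, ((1 / (((m : ℝ) - k) * ((n : ℝ) - m))) *
        ∑ j ∈ Finset.Icc (k + 1) m, ∑ i ∈ Finset.Icc (m + 1) n,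
          (if X i ω ≤ X j ω then (1 : ℝ) else 0)) ∂ℙ) = 1 / 2 ∧
    (∫ ω, ((1 / (((m : ℝ) - k) * (k : ℝ))) *
        ∑ j ∈ Finset.Icc (k + 1) m, ∑ i ∈ Finset.Icc 1 k,
          (if X i ω ≤ X j ω then (1 : ℝ) else 0)) ∂ℙ) =
      (ℙ {ω | X 1 ω ≤ X n ω}).toReal := by
  classical
  haveI hGP : IsProbabilityMeasure G := by
    rw [← hG n ⟨by omega, le_refl n⟩]; exact Measure.isProbabilityMeasure_map (hmeas n).aemeasurable
  haveI hFP : IsProbabilityMeasure F := by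
    rw [← hF 1 ⟨le_refl 1, hk1⟩]; exact Measure.isProbabilityMeasure_map (hmeas 1).aemeasurable
  have hpair : ∀ a b : ℕ, 1 ≤ a → a ≤ n → 1 ≤ b → b ≤ n → a ≠ b → IndepFun (X a) (X b) ℙ := by
    intro a b ha han hb hbn hab
    have h := hindep.indepFun (i := (⟨a - 1, by omega⟩ : Fin n))
      (j := (⟨b - 1, by omega⟩ : Fin n)) (by simp [Fin.ext_iff]; omega)
    simpa [Nat.sub_add_cancel ha, Nat.sub_add_cancel hb] using h
  have hterm1 : ∀ j ∈ Finset.Icc (k+1) m, ∀ i ∈ Finset.Icc (m+1) n,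
      ℙ {ω | X i ω ≤ X j ω} = (G.prod G) {p : ℝ × ℝ | p.1 ≤ p.2} := by
    intro j hj i hi
    simp only [Finset.mem_Icc] at hj hi
    rw [my_prob_le_eq _ _ (hmeas i) (hmeas j)
        (hpair i j (by omega) (by omega) (by omega) (by omega) (by omega)),
      hG i ⟨by omega, by omega⟩, hG j ⟨by omega, by omega⟩]
  have hterm2 : ∀ j ∈ Finset.Icc (k+1) m, ∀ i ∈ Finset.Icc 1 k,
      ℙ {ω | X i ω ≤ X j ω} = (F.prod G) {p : ℝ × ℝ | p.1 ≤ p.2} := by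
    intro j hj i hi
    simp only [Finset.mem_Icc] at hj hi
    rw [my_prob_le_eq _ _ (hmeas i) (hmeas j)
        (hpair i j (by omega) (by omega) (by omega) (by omega) (by omega)),
      hF i ⟨by omega, by omega⟩, hG j ⟨by omega, by omega⟩]
  have card1 : (Finset.Icc (k+1) m).card = m - k := by rw [Nat.card_Icc]; omega
  have card2 : (Finset.Icc (m+1) n).card = n - m := by rw [Nat.card_Icc]; omega
  have card3 : (Finset.Icc 1 k).card = k := by rw [Nat.card_Icc]; omega
  have hmkR : ((m:ℝ) - k) ≠ 0 := sub_ne_zero.mpr (by exact_mod_cast hkm.ne')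
  have hnmR : ((n:ℝ) - m) ≠ 0 := sub_ne_zero.mpr (by exact_mod_cast hmn.ne')
  have hkR : ((k:ℝ)) ≠ 0 := Nat.cast_ne_zero.mpr (by omega)
  have castmk : ((m - k : ℕ) : ℝ) = (m:ℝ) - k := by
    rw [Nat.cast_sub hkm.le]
  have castnm : ((n - m : ℕ) : ℝ) = (n:ℝ) - m := by
    rw [Nat.cast_sub hmn.le]
  have cancel : ∀ (a x : ℝ), a ≠ 0 → a * (1 / a * x) = x := by
    intro a x ha; field_simp
  refine ⟨?_, ?_, ?_⟩
  · -- pointwise decomposition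
    filter_upwards [hties] with ω hω
    have hrank : ∀ j, (combinedRank n X j ω : ℝ)
        = ∑ i ∈ Finset.Icc 1 n, (if X i ω ≤ X j ω then (1:ℝ) else 0) := by
      intro j
      rw [combinedRank, Finset.card_filter]
      push_cast
      exact Finset.sum_congr rfl fun i _ => by split <;> simp
    have hIccEq : Finset.Icc 1 n
        = (Finset.Icc 1 k ∪ Finset.Icc (k+1) m) ∪ Finset.Icc (m+1) n := by
      ext i; simp only [Finset.mem_Icc, Finset.mem_union]; omega
    have hd1 : Disjoint (Finset.Icc 1 k) (Finset.Icc (k+1) m) := by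
      rw [Finset.disjoint_left]; intro a ha hb
      simp only [Finset.mem_Icc] at ha hb; omega
    have hd2 : Disjoint (Finset.Icc 1 k ∪ Finset.Icc (k+1) m) (Finset.Icc (m+1) n) := by
      rw [Finset.disjoint_left]; intro a ha hb
      simp only [Finset.mem_Icc, Finset.mem_union] at ha hb; omega
    have hsum : (∑ j ∈ Finset.Icc (k + 1) m, (combinedRank n X j ω : ℝ))
        = (∑ j ∈ Finset.Icc (k+1) m, ∑ i ∈ Finset.Icc 1 k, (if X i ω ≤ X j ω then (1:ℝ) else 0))
          + (∑ j ∈ Finset.Icc (k+1) m, ∑ i ∈ Finset.Icc (k+1) m, (if X i ω ≤ X j ω then (1:ℝ) else 0))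
          + (∑ j ∈ Finset.Icc (k+1) m, ∑ i ∈ Finset.Icc (m+1) n, (if X i ω ≤ X j ω then (1:ℝ) else 0)) := by
      rw [Finset.sum_congr rfl fun j _ => hrank j]
      rw [Finset.sum_congr rfl fun j _ => by
        rw [hIccEq, Finset.sum_union hd2, Finset.sum_union hd1]]
      rw [Finset.sum_add_distrib, Finset.sum_add_distrib]
    have hinj : Set.InjOn (fun i => X i ω) ↑(Finset.Icc (k+1) m) := by
      rw [Finset.coe_Icc]
      exact hω.mono (Set.Icc_subset_Icc (by omega) (by omega))
    have hmid := my_sum_ite_le (Finset.Icc (k+1) m) (fun i => X i ω) hinj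
    rw [card1, castmk] at hmid
    rw [hsum, hmid, cancel _ _ (mul_ne_zero hmkR hnmR), cancel _ _ (mul_ne_zero hmkR hkR)]
    ring
  · -- E[V₁] = 1/2
    rw [MeasureTheory.integral_const_mul]
    rw [integral_finset_sum _ fun j hj =>
      integrable_finset_sum _ fun i hi => my_integrable_ite _ _ (hmeas i) (hmeas j)]
    rw [Finset.sum_congr rfl fun j hj => by
      rw [integral_finset_sum _ fun i hi => my_integrable_ite _ _ (hmeas i) (hmeas j)]]
    have : ∀ j ∈ Finset.Icc (k+1) m, ∀ i ∈ Finset.Icc (m+1) n,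
        (∫ ω, (if X i ω ≤ X j ω then (1:ℝ) else 0) ∂ℙ) = (1/2 : ℝ) := by
      intro j hj i hi
      rw [my_integral_ite _ _ (hmeas i) (hmeas j), hterm1 j hj i hi,
        my_prod_le_half G hGcont]
      simp [ENNReal.toReal_div]
    rw [Finset.sum_congr rfl fun j hj => Finset.sum_congr rfl fun i hi => this j hj i hi]
    simp only [Finset.sum_const, nsmul_eq_mul, card1, card2, castmk, castnm]
    field_simp
  · -- E[V₂] = p
    have hp : ℙ {ω | X 1 ω ≤ X n ω} = (F.prod G) {p : ℝ × ℝ | p.1 ≤ p.2} := by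
      rw [my_prob_le_eq _ _ (hmeas 1) (hmeas n)
          (hpair 1 n (le_refl 1) (by omega) (by omega) (le_refl n) (by omega)),
        hF 1 ⟨le_refl 1, hk1⟩, hG n ⟨by omega, le_refl n⟩]
    rw [MeasureTheory.integral_const_mul]
    rw [integral_finset_sum _ fun j hj =>
      integrable_finset_sum _ fun i hi => my_integrable_ite _ _ (hmeas i) (hmeas j)]
    rw [Finset.sum_congr rfl fun j hj => by
      rw [integral_finset_sum _ fun i hi => my_integrable_ite _ _ (hmeas i) (hmeas j)]]
    have : ∀ j ∈ Finset.Icc (k+1) m, ∀ i ∈ Finset.Icc 1 k,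
        (∫ ω, (if X i ω ≤ X j ω then (1:ℝ) else 0) ∂ℙ)
          = ((F.prod G) {p : ℝ × ℝ | p.1 ≤ p.2}).toReal := by
      intro j hj i hi
      rw [my_integral_ite _ _ (hmeas i) (hmeas j), hterm2 j hj i hi]
    rw [Finset.sum_congr rfl fun j hj => Finset.sum_congr rfl fun i hi => this j hj i hi]
    simp only [Finset.sum_const, nsmul_eq_mul, card1, card3, castmk]
    rw [hp]
    field_simp
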